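/- Let X be a countable discrete metric space. If the uniform Roe algebra C*_u(X) is monotone complete, then X is bounded. -/

import Mathlib

noncomputable section

/-- `ℓ²(X)`. -/
abbrev H (X : Type) := lp (fun _ : X => ℂ) 2

/-- The delta function `δ_x`. -/
def delta {X : Type} (x : X) : H X :=
  letI := Classical.decEq X
  lp.single 2 x 1

/-- Matrix entry `⟨δ_y, T δ_x⟩` of an operator. -/
def entry {X Y : Type} (T : H X →L[ℂ] H Y) (y : Y) (x : X) : ℂ := (T (delta x)) y

/-- The uniform Roe algebra `C*_u(X)`. -/
def RoeSet (X : Type) [MetricSpace X] : Set (H X →L[ℂ] H X) :=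
  closure {T | ∃ L : ℝ, ∀ x y : X, L ≤ dist x y → entry T y x = 0}

/-- The Loewner order on operators: `A ≤ B` iff `B - A` is positive. -/
def opLE {X : Type} (A B : H X →L[ℂ] H X) : Prop := (B - A).IsPositive

/-- Monotone completeness of `C*_u(X)`: every nonempty norm-bounded upward-directed
(increasing) set of self-adjoint elements of `C*_u(X)` has a least upper bound in
`C*_u(X)` with respect to the Loewner order. -/
def MonotoneComplete (X : Type) [MetricSpace X] : Prop :=
  ∀ S : Set (H X →L[ℂ] H X), S.Nonempty → S ⊆ RoeSet X →
    (∀ a ∈ S, IsSelfAdjoint a) →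
    (∀ a ∈ S, ∀ b ∈ S, ∃ c ∈ S, opLE a c ∧ opLE b c) →
    (∃ C : ℝ, ∀ a ∈ S, ‖a‖ ≤ C) →
    ∃ u ∈ RoeSet X, (∀ a ∈ S, opLE a u) ∧
      ∀ v ∈ RoeSet X, IsSelfAdjoint v → (∀ a ∈ S, opLE a v) → opLE u v


namespace Stmt2Aux

open ContinuousLinearMap RCLike

local notation "⟪" x ", " y "⟫" => @inner ℂ _ _ x y

variable {X : Type}

def rk (v : H X) : H X →L[ℂ] H X := (innerSL ℂ v).smulRight v
lemma rk_apply (v ξ : H X) : rk v ξ = ⟪v, ξ⟫ • v := rfl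

lemma inner_delta_left (p : X) (f : H X) : ⟪delta p, f⟫ = f p := by
  letI := Classical.decEq X
  rw [delta, lp.inner_single_left]
  simp [RCLike.inner_apply]

lemma delta_apply_self (p : X) : (delta p : H X) p = 1 := by
  letI := Classical.decEq X
  exact lp.single_apply_self 2 p 1

lemma delta_apply_ne {p q : X} (h : q ≠ p) : (delta p : H X) q = 0 := by
  letI := Classical.decEq X
  exact lp.single_apply_ne 2 p 1 h

lemma inner_delta_self (p : X) : ⟪delta p, delta p⟫ = 1 := by
  rw [inner_delta_left, delta_apply_self]

lemma inner_delta_ne {p q : X} (h : p ≠ q) : ⟪delta p, delta q⟫ = 0 := by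
  rw [inner_delta_left, delta_apply_ne h]

-- pair vectors
def vv (p : ℕ → X) (n : ℕ) : H X := delta (p (2*n)) + delta (p (2*n+1))
def ww (p : ℕ → X) (n : ℕ) : H X := delta (p (2*n)) - delta (p (2*n+1))

variable {p : ℕ → X}

lemma inner_delta_p (hinj : Function.Injective p) (a b : ℕ) :
    ⟪(delta (p a) : H X), delta (p b)⟫ = if a = b then 1 else 0 := by
  by_cases h : a = b
  · subst h; rw [if_pos rfl, inner_delta_self]
  · rw [if_neg h]; exact inner_delta_ne (fun hc => h (hinj hc))

lemma inner_vv_vv (hinj : Function.Injective p) (i j : ℕ) :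
    ⟪vv p i, vv p j⟫ = if i = j then 2 else 0 := by
  simp only [vv, inner_add_left, inner_add_right, inner_delta_p hinj]
  by_cases h : i = j
  · subst h
    have h1 : 2*i ≠ 2*i+1 := by omega
    simp [h1, Ne.symm h1]
    norm_num
  · have h1 : 2*i ≠ 2*j := by omega
    have h2 : 2*i ≠ 2*j+1 := by omega
    have h3 : 2*i+1 ≠ 2*j := by omega
    have h4 : 2*i+1 ≠ 2*j+1 := by omega
    simp [h, h1, h2, h3, h4]

lemma inner_ww_ww (hinj : Function.Injective p) (i j : ℕ) :
    ⟪ww p i, ww p j⟫ = if i = j then 2 else 0 := by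
  simp only [ww, inner_sub_left, inner_sub_right, inner_delta_p hinj]
  by_cases h : i = j
  · subst h
    have h1 : 2*i ≠ 2*i+1 := by omega
    simp [h1, Ne.symm h1]
    norm_num
  · have h1 : 2*i ≠ 2*j := by omega
    have h2 : 2*i ≠ 2*j+1 := by omega
    have h3 : 2*i+1 ≠ 2*j := by omega
    have h4 : 2*i+1 ≠ 2*j+1 := by omega
    simp [h, h1, h2, h3, h4]

lemma inner_vv_ww (hinj : Function.Injective p) (i j : ℕ) :
    ⟪vv p i, ww p j⟫ = 0 := by
  simp only [vv, ww, inner_add_left, inner_sub_right, inner_delta_p hinj]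
  by_cases h : i = j
  · subst h
    have h1 : 2*i ≠ 2*i+1 := by omega
    simp [h1, Ne.symm h1]
  · have h1 : 2*i ≠ 2*j := by omega
    have h2 : 2*i ≠ 2*j+1 := by omega
    have h3 : 2*i+1 ≠ 2*j := by omega
    have h4 : 2*i+1 ≠ 2*j+1 := by omega
    simp [h1, h2, h3, h4]

lemma inner_ww_vv (hinj : Function.Injective p) (i j : ℕ) :
    ⟪ww p i, vv p j⟫ = 0 := by
  rw [← inner_conj_symm, inner_vv_ww hinj, map_zero]

lemma rk_symm (v : H X) : (rk v : H X →ₗ[ℂ] H X).IsSymmetric := by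
  intro x y
  simp only [ContinuousLinearMap.coe_coe, rk_apply, inner_smul_left, inner_smul_right,
    inner_conj_symm]
  ring

lemma rk_isSelfAdjoint (v : H X) : IsSelfAdjoint (rk v) :=
  (isSelfAdjoint_iff_isSymmetric).mpr (rk_symm v)

lemma re_inner_rk (v ξ : H X) : re ⟪rk v ξ, ξ⟫ = ‖⟪v, ξ⟫‖ ^ 2 := by
  rw [rk_apply, inner_smul_left, inner_conj_symm]
  rw [← inner_conj_symm ξ v, RCLike.conj_mul]
  simp [← Complex.ofReal_pow]

lemma rk_isPositive (v : H X) : (rk v).IsPositive := by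
  refine ⟨rk_symm v, fun ξ => ?_⟩
  rw [reApplyInnerSelf_apply, re_inner_rk]
  positivity

lemma sum_rk_isPositive (g : ℕ → H X) (s : Finset ℕ) :
    (∑ n ∈ s, rk (g n)).IsPositive := by
  refine Finset.sum_induction _ _ (fun a b ha hb => ha.add hb) isPositive_zero ?_
  exact fun i _ => rk_isPositive (g i)

lemma pos_null {T : H X →L[ℂ] H X} (hT : T.IsPositive) {ξ : H X}
    (h : re ⟪T ξ, ξ⟫ = 0) : T ξ = 0 := by
  have hsym : (T : H X →ₗ[ℂ] H X).IsSymmetric := hT.1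
  have key : ∀ η : H X, re ⟪T ξ, η⟫ = 0 := by
    intro η
    set α := re ⟪T ξ, η⟫ with hα
    set β := re ⟪T η, η⟫ with hβdef
    have hβ : 0 ≤ β := by have := hT.2 η; rwa [reApplyInnerSelf_apply] at this
    have hη : ⟪T η, ξ⟫ = (starRingEnd ℂ) ⟪T ξ, η⟫ := by
      have h' := hsym η ξ
      simp only [ContinuousLinearMap.coe_coe] at h'
      rw [h', ← inner_conj_symm]
    have hforall : ∀ t : ℝ, 0 ≤ 2 * t * α + t ^ 2 * β := by
      intro t
      have h0 := hT.2 (ξ + (t : ℂ) • η)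
      rw [reApplyInnerSelf_apply] at h0
      have hexp : ⟪T (ξ + (t : ℂ) • η), ξ + (t : ℂ) • η⟫ =
          ⟪T ξ, ξ⟫ + (t : ℂ) * ⟪T ξ, η⟫ + (t : ℂ) * ⟪T η, ξ⟫ + ((t ^ 2 : ℝ) : ℂ) * ⟪T η, η⟫ := by
        rw [map_add, map_smul]
        simp only [inner_add_left, inner_add_right, inner_smul_left, inner_smul_right,
          Complex.conj_ofReal]
        push_cast
        ring
      have hre : re ⟪T (ξ + (t : ℂ) • η), ξ + (t : ℂ) • η⟫ = 2 * t * α + t ^ 2 * β := by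
        rw [hexp, hη]
        have h3 : (⟪T ξ, ξ⟫ : ℂ).re = 0 := h
        simp only [RCLike.re_to_complex, Complex.add_re, Complex.mul_re, Complex.ofReal_re,
          Complex.ofReal_im, Complex.conj_re, Complex.conj_im, h3, hα, hβdef,
          RCLike.re_to_complex]
        ring
      rw [hre] at h0; exact h0
    have hb1 : (0:ℝ) < β + 1 := by linarith
    have ht := hforall (-(α / (β + 1)))
    have e : 2 * (-(α / (β + 1))) * α + (-(α / (β + 1))) ^ 2 * β
        = (-(α ^ 2) * (β + 2)) / (β + 1) ^ 2 := by
      field_simp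
      ring
    rw [e] at ht
    have h10 : 0 ≤ -(α ^ 2) * (β + 2) := by
      rcases div_nonneg_iff.mp ht with ⟨h', _⟩ | ⟨_, h2'⟩
      · exact h'
      · nlinarith [sq_nonneg (β + 1)]
    have h11 : α ^ 2 = 0 := le_antisymm (by nlinarith) (sq_nonneg α)
    exact pow_eq_zero_iff two_ne_zero |>.mp h11
  have keyC : ∀ η : H X, ⟪T ξ, η⟫ = 0 := by
    intro η
    have h1 := key η
    have h2 := key ((Complex.I : ℂ) • η)
    rw [inner_smul_right] at h2
    simp only [RCLike.re_to_complex, Complex.mul_re, Complex.I_re, Complex.I_im] at h2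
    apply Complex.ext
    · simpa using h1
    · simpa using h2
  have := keyC (T ξ)
  rwa [inner_self_eq_zero] at this

def SS (p : ℕ → X) (N : ℕ) : H X →L[ℂ] H X := ∑ n ∈ Finset.range (N+1), rk (vv p n)
def QQ (p : ℕ → X) (m : ℕ) : H X →L[ℂ] H X :=
  (2:ℂ) • 1 - ∑ n ∈ Finset.range (m+1), rk (ww p n)

lemma SS_isSelfAdjoint (N : ℕ) : IsSelfAdjoint (SS p N) := by
  refine Finset.sum_induction _ _ (fun a b ha hb => ha.add hb) (.zero _) ?_
  exact fun i _ => rk_isSelfAdjoint (vv p i)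

lemma QQ_isSelfAdjoint (m : ℕ) : IsSelfAdjoint (QQ p m) := by
  refine IsSelfAdjoint.sub (IsSelfAdjoint.smul ?_ (.one _)) ?_
  · simp [Complex.star_def]
  · refine Finset.sum_induction _ _ (fun a b ha hb => ha.add hb) (.zero _) ?_
    exact fun i _ => rk_isSelfAdjoint (ww p i)

lemma SS_mono {N M : ℕ} (h : N ≤ M) : (SS p M - SS p N).IsPositive := by
  have hsub : Finset.range (N+1) ⊆ Finset.range (M+1) :=
    Finset.range_subset_range.mpr (by omega)
  rw [SS, SS, ← Finset.sum_sdiff_eq_sub hsub]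
  exact sum_rk_isPositive _ _

lemma SS_apply_vv (hinj : Function.Injective p) {N n : ℕ} (hn : n ≤ N) :
    SS p N (vv p n) = (2:ℂ) • vv p n := by
  rw [SS, ContinuousLinearMap.sum_apply]
  rw [Finset.sum_eq_single n]
  · rw [rk_apply, inner_vv_vv hinj, if_pos rfl]
  · intro k hk hkn
    rw [rk_apply, inner_vv_vv hinj, if_neg hkn, zero_smul]
  · intro hn'
    exact absurd (Finset.mem_range.mpr (by omega)) hn'

lemma SS_apply_ww (hinj : Function.Injective p) (N n : ℕ) :
    SS p N (ww p n) = 0 := by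
  rw [SS, ContinuousLinearMap.sum_apply]
  refine Finset.sum_eq_zero fun k _ => ?_
  rw [rk_apply, inner_vv_ww hinj, zero_smul]

lemma QQ_apply_vv (hinj : Function.Injective p) (m n : ℕ) :
    QQ p m (vv p n) = (2:ℂ) • vv p n := by
  rw [QQ, ContinuousLinearMap.sub_apply, ContinuousLinearMap.smul_apply,
    ContinuousLinearMap.one_apply, ContinuousLinearMap.sum_apply]
  have : ∑ k ∈ Finset.range (m+1), rk (ww p k) (vv p n) = 0 := by
    refine Finset.sum_eq_zero fun k _ => ?_
    rw [rk_apply, inner_ww_vv hinj, zero_smul]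
  rw [this, sub_zero]

lemma QQ_apply_ww (hinj : Function.Injective p) {m n : ℕ} (hn : n ≤ m) :
    QQ p m (ww p n) = 0 := by
  rw [QQ, ContinuousLinearMap.sub_apply, ContinuousLinearMap.smul_apply,
    ContinuousLinearMap.one_apply, ContinuousLinearMap.sum_apply]
  have : ∑ k ∈ Finset.range (m+1), rk (ww p k) (ww p n) = (2:ℂ) • ww p n := by
    rw [Finset.sum_eq_single n]
    · rw [rk_apply, inner_ww_ww hinj, if_pos rfl]
    · intro k hk hkn
      rw [rk_apply, inner_ww_ww hinj, if_neg hkn, zero_smul]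
    · intro hn'
      exact absurd (Finset.mem_range.mpr (by omega)) hn'
  rw [this, sub_self]

lemma SS_apply_eq (N : ℕ) (ξ : H X) :
    SS p N ξ = ∑ k ∈ Finset.range (N+1), ⟪vv p k, ξ⟫ • vv p k := by
  rw [SS, ContinuousLinearMap.sum_apply]
  exact Finset.sum_congr rfl fun k _ => rk_apply _ _

lemma SS_comp (hinj : Function.Injective p) (N : ℕ) (ξ : H X) :
    SS p N (SS p N ξ) = (2:ℂ) • SS p N ξ := by
  conv_lhs => rw [SS_apply_eq N ξ]
  rw [map_sum]
  have h : ∀ k ∈ Finset.range (N+1),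
      SS p N (⟪vv p k, ξ⟫ • vv p k) = (2:ℂ) • (⟪vv p k, ξ⟫ • vv p k) := by
    intro k hk
    rw [map_smul, SS_apply_vv hinj (by simpa using Nat.lt_succ_iff.mp (Finset.mem_range.mp hk)),
      smul_comm]
  rw [Finset.sum_congr rfl h, ← Finset.smul_sum, ← SS_apply_eq]

lemma SS_norm_le (hinj : Function.Injective p) (N : ℕ) : ‖SS p N‖ ≤ 2 := by
  refine ContinuousLinearMap.opNorm_le_bound _ (by norm_num) fun ξ => ?_
  have hsym := isSelfAdjoint_iff_isSymmetric.mp (SS_isSelfAdjoint (p := p) N)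
  have h1 : ‖SS p N ξ‖ ^ 2 = re ⟪SS p N (SS p N ξ), ξ⟫ := by
    have h2 := hsym (SS p N ξ) ξ
    simp only [ContinuousLinearMap.coe_coe] at h2
    rw [h2, ← inner_self_eq_norm_sq (𝕜 := ℂ)]
  rw [SS_comp hinj, inner_smul_left] at h1
  have h3 : re ((starRingEnd ℂ) (2:ℂ) * ⟪SS p N ξ, ξ⟫) = 2 * re ⟪SS p N ξ, ξ⟫ := by
    simp [Complex.mul_re]
  rw [h3] at h1
  have h4 : re ⟪SS p N ξ, ξ⟫ ≤ ‖SS p N ξ‖ * ‖ξ‖ := by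
    refine le_trans ?_ (norm_inner_le_norm (𝕜 := ℂ) _ _)
    exact RCLike.re_le_norm (K := ℂ) _
  nlinarith [norm_nonneg (SS p N ξ), norm_nonneg ξ]

lemma norm_delta (q : X) : ‖(delta q : H X)‖ = 1 := by
  letI := Classical.decEq X
  have h := lp.norm_single (E := fun _ : X => ℂ) (p := 2) (by norm_num) q (1:ℂ)
  simp only [norm_one] at h
  exact h

lemma orthonormal_delta (hinj : Function.Injective p) :
    Orthonormal ℂ (fun j : ℕ => (delta (p j) : H X)) := by
  constructor
  · intro i; exact norm_delta _
  · intro i j hij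
    exact inner_delta_ne (fun h => hij (hinj h))

lemma QF_eq (m N : ℕ) (ξ : H X) :
    re ⟪(QQ p m - SS p N) ξ, ξ⟫ =
      2 * ‖ξ‖^2 - (∑ n ∈ Finset.range (m+1), ‖⟪ww p n, ξ⟫‖^2)
        - (∑ n ∈ Finset.range (N+1), ‖⟪vv p n, ξ⟫‖^2) := by
  rw [QQ, SS]
  simp only [ContinuousLinearMap.sub_apply, ContinuousLinearMap.smul_apply,
    ContinuousLinearMap.one_apply, ContinuousLinearMap.sum_apply]
  rw [inner_sub_left, inner_sub_left, inner_smul_left, sum_inner, sum_inner, map_sub, map_sub,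
    map_sum, map_sum]
  have e1 : re ((starRingEnd ℂ) (2:ℂ) * ⟪ξ, ξ⟫) = 2 * ‖ξ‖^2 := by
    have him : (⟪ξ, ξ⟫ : ℂ).im = 0 := inner_self_im (𝕜 := ℂ) ξ
    have hre : re (⟪ξ, ξ⟫ : ℂ) = ‖ξ‖^2 := inner_self_eq_norm_sq (𝕜 := ℂ) ξ
    simp only [RCLike.re_to_complex] at hre ⊢
    simp [Complex.mul_re, him, hre, ← Complex.ofReal_pow]
  rw [e1]
  rw [Finset.sum_congr rfl (fun n _ => re_inner_rk (ww p n) ξ),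
    Finset.sum_congr rfl (fun n _ => re_inner_rk (vv p n) ξ)]

lemma sum_pairs (g : ℕ → ℝ) : ∀ M : ℕ, ∑ j ∈ Finset.range (2*M), g j
    = ∑ n ∈ Finset.range M, (g (2*n) + g (2*n+1))
  | 0 => by simp
  | (M+1) => by
      rw [Finset.sum_range_succ, ← sum_pairs g M]
      have h2 : 2*(M+1) = (2*M+1)+1 := by ring
      rw [h2, Finset.sum_range_succ, Finset.sum_range_succ]
      ring

lemma parallelogram_vw (n : ℕ) (ξ : H X) :
    ‖⟪vv p n, ξ⟫‖^2 + ‖⟪ww p n, ξ⟫‖^2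
      = 2*(‖⟪(delta (p (2*n)) : H X), ξ⟫‖^2 + ‖⟪(delta (p (2*n+1)) : H X), ξ⟫‖^2) := by
  rw [vv, ww, inner_add_left, inner_sub_left]
  have h := parallelogram_law_with_norm ℂ (⟪(delta (p (2*n)) : H X), ξ⟫ : ℂ)
    (⟪(delta (p (2*n+1)) : H X), ξ⟫ : ℂ)
  simp only [pow_two]
  linarith

lemma QQ_sub_SS_isPositive (hinj : Function.Injective p) (m N : ℕ) :
    (QQ p m - SS p N).IsPositive := by
  refine ⟨isSelfAdjoint_iff_isSymmetric.mp ((QQ_isSelfAdjoint m).sub (SS_isSelfAdjoint N)), fun ξ => ?_⟩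
  rw [reApplyInnerSelf_apply, QF_eq]
  set K := max m N with hK
  have hnn : ∀ (g : ℕ → H X) (n : ℕ), (0:ℝ) ≤ ‖⟪g n, ξ⟫‖^2 := fun g n => by positivity
  have h1 : ∑ n ∈ Finset.range (m+1), ‖⟪ww p n, ξ⟫‖^2
      ≤ ∑ n ∈ Finset.range (K+1), ‖⟪ww p n, ξ⟫‖^2 :=
    Finset.sum_le_sum_of_subset_of_nonneg (Finset.range_subset_range.mpr (by omega))
      (fun i _ _ => hnn _ i)
  have h2 : ∑ n ∈ Finset.range (N+1), ‖⟪vv p n, ξ⟫‖^2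
      ≤ ∑ n ∈ Finset.range (K+1), ‖⟪vv p n, ξ⟫‖^2 :=
    Finset.sum_le_sum_of_subset_of_nonneg (Finset.range_subset_range.mpr (by omega))
      (fun i _ _ => hnn _ i)
  have h3 : (∑ n ∈ Finset.range (K+1), ‖⟪vv p n, ξ⟫‖^2)
      + ∑ n ∈ Finset.range (K+1), ‖⟪ww p n, ξ⟫‖^2 ≤ 2 * ‖ξ‖^2 := by
    rw [← Finset.sum_add_distrib]
    rw [Finset.sum_congr rfl (fun n _ => parallelogram_vw n ξ), ← Finset.mul_sum]
    have hb : ∑ n ∈ Finset.range (K+1),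
        (‖⟪(delta (p (2*n)) : H X), ξ⟫‖^2 + ‖⟪(delta (p (2*n+1)) : H X), ξ⟫‖^2) ≤ ‖ξ‖^2 := by
      rw [← sum_pairs (fun j => ‖⟪(delta (p j) : H X), ξ⟫‖^2) (K+1)]
      exact (orthonormal_delta hinj).sum_inner_products_le ξ
    linarith
  linarith

lemma entry_rk (v : H X) (y x : X) : entry (rk v) y x = (starRingEnd ℂ) (v x) * v y := by
  unfold entry
  rw [rk_apply, lp.coeFn_smul, Pi.smul_apply]
  have h : ⟪v, delta x⟫ = (starRingEnd ℂ) (v x) := by rw [← inner_conj_symm, inner_delta_left]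
  rw [h, smul_eq_mul]

lemma entry_sum (F : ℕ → (H X →L[ℂ] H X)) (s : Finset ℕ) (y x : X) :
    entry (∑ n ∈ s, F n) y x = ∑ n ∈ s, entry (F n) y x := by
  unfold entry
  rw [ContinuousLinearMap.sum_apply, lp.coeFn_sum]
  simp

lemma entry_sub (A B : H X →L[ℂ] H X) (y x : X) :
    entry (A - B) y x = entry A y x - entry B y x := by
  unfold entry
  rw [ContinuousLinearMap.sub_apply, lp.coeFn_sub]
  simp

lemma vv_apply_zero {n : ℕ} {q : X} (h1 : q ≠ p (2*n)) (h2 : q ≠ p (2*n+1)) :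
    (vv p n : H X) q = 0 := by
  rw [vv, lp.coeFn_add, Pi.add_apply, delta_apply_ne h1, delta_apply_ne h2, add_zero]

lemma ww_apply_zero {n : ℕ} {q : X} (h1 : q ≠ p (2*n)) (h2 : q ≠ p (2*n+1)) :
    (ww p n : H X) q = 0 := by
  rw [ww, lp.coeFn_sub, Pi.sub_apply, delta_apply_ne h1, delta_apply_ne h2, sub_zero]

section Metric
variable [MetricSpace X]

lemma pair_entry_zero {g : ℕ → H X}
    (hg : ∀ n q, q ≠ p (2*n) → q ≠ p (2*n+1) → (g n : H X) q = 0)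
    {L : ℝ} {s : Finset ℕ}
    (hL : ∀ n ∈ s, dist (p (2*n)) (p (2*n+1)) < L)
    {x y : X} (hxy : L ≤ dist x y) (n : ℕ) (hn : n ∈ s) :
    entry (rk (g n)) y x = 0 := by
  rw [entry_rk]
  by_cases hx1 : x = p (2*n)
  · by_cases hy1 : y = p (2*n)
    · exfalso
      rw [hx1, hy1, dist_self] at hxy
      have := hL n hn
      have := dist_nonneg (x := p (2*n)) (y := p (2*n+1))
      linarith
    · by_cases hy2 : y = p (2*n+1)
      · exfalso
        rw [hx1, hy2] at hxy
        have := hL n hn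
        linarith
      · rw [hg n y hy1 hy2, mul_zero]
  · by_cases hx2 : x = p (2*n+1)
    · by_cases hy1 : y = p (2*n)
      · exfalso
        rw [hx2, hy1, dist_comm] at hxy
        have := hL n hn
        linarith
      · by_cases hy2 : y = p (2*n+1)
        · exfalso
          rw [hx2, hy2, dist_self] at hxy
          have := hL n hn
          have := dist_nonneg (x := p (2*n)) (y := p (2*n+1))
          linarith
        · rw [hg n y hy1 hy2, mul_zero]
    · rw [hg n x hx1 hx2, map_zero, zero_mul]

lemma SS_finiteprop (N : ℕ) :
    ∃ L : ℝ, ∀ x y : X, L ≤ dist x y → entry (SS p N) y x = 0 := by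
  refine ⟨1 + ∑ n ∈ Finset.range (N+1), dist (p (2*n)) (p (2*n+1)), fun x y hxy => ?_⟩
  rw [SS, entry_sum]
  refine Finset.sum_eq_zero fun n hn => ?_
  refine pair_entry_zero (fun k q => vv_apply_zero) (fun k hk => ?_) hxy n hn
  have hle : dist (p (2*k)) (p (2*k+1)) ≤ ∑ n ∈ Finset.range (N+1), dist (p (2*n)) (p (2*n+1)) :=
    Finset.single_le_sum (f := fun n => dist (p (2*n)) (p (2*n+1))) (fun i _ => dist_nonneg) hk
  linarith

lemma QQ_finiteprop (m : ℕ) :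
    ∃ L : ℝ, ∀ x y : X, L ≤ dist x y → entry (QQ p m) y x = 0 := by
  refine ⟨1 + ∑ n ∈ Finset.range (m+1), dist (p (2*n)) (p (2*n+1)), fun x y hxy => ?_⟩
  have hsum : (0:ℝ) ≤ ∑ n ∈ Finset.range (m+1), dist (p (2*n)) (p (2*n+1)) :=
    Finset.sum_nonneg (fun i _ => dist_nonneg)
  rw [QQ, entry_sub]
  have h1 : entry ((2:ℂ) • (1 : H X →L[ℂ] H X)) y x = 0 := by
    have hyx : y ≠ x := by
      intro h
      rw [h, dist_self] at hxy
      linarith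
    unfold entry
    rw [ContinuousLinearMap.smul_apply, ContinuousLinearMap.one_apply, lp.coeFn_smul,
      Pi.smul_apply, delta_apply_ne hyx, smul_zero]
  rw [h1, entry_sum, zero_sub, neg_eq_zero]
  refine Finset.sum_eq_zero fun n hn => ?_
  refine pair_entry_zero (fun k q => ww_apply_zero) (fun k hk => ?_) hxy n hn
  have hle : dist (p (2*k)) (p (2*k+1)) ≤ ∑ n ∈ Finset.range (m+1), dist (p (2*n)) (p (2*n+1)) :=
    Finset.single_le_sum (f := fun n => dist (p (2*n)) (p (2*n+1))) (fun i _ => dist_nonneg) hk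
  linarith

end Metric

lemma exists_seq [MetricSpace X] (hB : ¬ Bornology.IsBounded (Set.univ : Set X)) :
    ∃ p : ℕ → X, ∀ i j : ℕ, i < j → (j:ℝ) ≤ dist (p i) (p j) := by
  have hne : Nonempty X := by
    by_contra hemp
    rw [not_nonempty_iff] at hemp
    exact hB (by simp [Set.univ_eq_empty_iff.mpr hemp])
  obtain ⟨x0⟩ := hne
  have hU : ∀ r : ℝ, ∃ y : X, r < dist x0 y := by
    by_contra hc
    push_neg at hc
    obtain ⟨r, hr⟩ := hc
    refine hB ((Metric.isBounded_iff_subset_closedBall x0).mpr ⟨r, fun y _ => ?_⟩)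
    rw [Metric.mem_closedBall, dist_comm]
    exact hr y
  let q : ℕ → X := fun n =>
    Nat.rec x0 (fun k qk => Classical.choose (hU (dist x0 qk + (k+1)))) n
  have hq : ∀ k : ℕ, dist x0 (q k) + ((k:ℝ)+1) < dist x0 (q (k+1)) := by
    intro k
    exact Classical.choose_spec (hU (dist x0 (q k) + (k+1)))
  have hgrow : ∀ i j : ℕ, i < j → dist x0 (q i) + (j:ℝ) ≤ dist x0 (q j) := by
    intro i j
    induction j with
    | zero => intro h; omega
    | succ j ih =>
      intro hij
      rcases Nat.lt_succ_iff_lt_or_eq.mp hij with h | h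
      · have h1 := ih h
        have h2 := hq j
        have h3 : (0:ℝ) ≤ (j:ℝ) := Nat.cast_nonneg j
        push_cast
        linarith
      · subst h
        have h2 := hq i
        push_cast
        linarith
  refine ⟨q, fun i j hij => ?_⟩
  have h1 := hgrow i j hij
  have h2 := dist_triangle x0 (q i) (q j)
  have h3 : (0:ℝ) ≤ dist x0 (q i) := dist_nonneg
  linarith

end Stmt2Aux

/-- if the uniform Roe algebra of a countable discrete metric space `X` is
monotone complete, then `X` is bounded. -/
theorem stmt_2 {X : Type} [MetricSpace X] [Countable X]
    (hmc : MonotoneComplete X) :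
    Bornology.IsBounded (Set.univ : Set X) := by
  classical
  by_contra hB
  obtain ⟨p, hp⟩ := Stmt2Aux.exists_seq hB
  have hinj : Function.Injective p := by
    intro i j hij
    by_contra hne
    rcases lt_trichotomy i j with h | h | h
    · have h1 := hp i j h
      rw [hij, dist_self] at h1
      have : (1:ℝ) ≤ (j:ℝ) := by exact_mod_cast Nat.one_le_iff_ne_zero.mpr (by omega)
      linarith
    · exact hne h
    · have h1 := hp j i h
      rw [hij, dist_self] at h1
      have : (1:ℝ) ≤ (i:ℝ) := by exact_mod_cast Nat.one_le_iff_ne_zero.mpr (by omega)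
      linarith
  set S : Set (H X →L[ℂ] H X) := Set.range (fun N => Stmt2Aux.SS p N) with hSdef
  obtain ⟨u, hu_roe, hub, hleast⟩ := hmc S ⟨Stmt2Aux.SS p 0, ⟨0, rfl⟩⟩
    (by rintro a ⟨N, rfl⟩; exact subset_closure (Stmt2Aux.SS_finiteprop N))
    (by rintro a ⟨N, rfl⟩; exact Stmt2Aux.SS_isSelfAdjoint N)
    (by
      rintro a ⟨N, rfl⟩ b ⟨M, rfl⟩
      refine ⟨Stmt2Aux.SS p (max N M), ⟨max N M, rfl⟩, ?_, ?_⟩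
      · exact Stmt2Aux.SS_mono (le_max_left N M)
      · exact Stmt2Aux.SS_mono (le_max_right N M))
    ⟨2, by rintro a ⟨N, rfl⟩; exact Stmt2Aux.SS_norm_le hinj N⟩
  have hlb : ∀ N, (u - Stmt2Aux.SS p N).IsPositive := fun N => hub _ ⟨N, rfl⟩
  have hOple : ∀ n, (Stmt2Aux.QQ p n - u).IsPositive := by
    intro n
    refine hleast (Stmt2Aux.QQ p n) (subset_closure (Stmt2Aux.QQ_finiteprop n))
      (Stmt2Aux.QQ_isSelfAdjoint n) ?_
    rintro a ⟨N, rfl⟩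
    exact Stmt2Aux.QQ_sub_SS_isPositive hinj n N
  have huv : ∀ n, u (Stmt2Aux.vv p n) = (2:ℂ) • Stmt2Aux.vv p n := by
    intro n
    have h1 := hlb n
    have h2 := hOple n
    have h24 : RCLike.re ((starRingEnd ℂ) (2:ℂ)
        * (inner ℂ (Stmt2Aux.vv p n) (Stmt2Aux.vv p n) : ℂ)) = 4 := by
      rw [Stmt2Aux.inner_vv_vv hinj, if_pos rfl]
      simp [Complex.ext_iff]
      norm_num
    have e1 : RCLike.re (inner ℂ ((u - Stmt2Aux.SS p n) (Stmt2Aux.vv p n)) (Stmt2Aux.vv p n) : ℂ)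
        = RCLike.re (inner ℂ (u (Stmt2Aux.vv p n)) (Stmt2Aux.vv p n) : ℂ) - 4 := by
      rw [ContinuousLinearMap.sub_apply, inner_sub_left, map_sub,
        Stmt2Aux.SS_apply_vv hinj le_rfl, inner_smul_left, h24]
    have e2 : RCLike.re (inner ℂ ((Stmt2Aux.QQ p n - u) (Stmt2Aux.vv p n)) (Stmt2Aux.vv p n) : ℂ)
        = 4 - RCLike.re (inner ℂ (u (Stmt2Aux.vv p n)) (Stmt2Aux.vv p n) : ℂ) := by
      rw [ContinuousLinearMap.sub_apply, inner_sub_left, map_sub,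
        Stmt2Aux.QQ_apply_vv hinj, inner_smul_left, h24]
    have a1 := h1.2 (Stmt2Aux.vv p n)
    rw [ContinuousLinearMap.reApplyInnerSelf_apply, e1] at a1
    have a2 := h2.2 (Stmt2Aux.vv p n)
    rw [ContinuousLinearMap.reApplyInnerSelf_apply, e2] at a2
    have hz : RCLike.re (inner ℂ ((Stmt2Aux.QQ p n - u) (Stmt2Aux.vv p n)) (Stmt2Aux.vv p n) : ℂ)
        = 0 := by
      rw [e2]; linarith
    have h0 := Stmt2Aux.pos_null h2 hz
    rw [ContinuousLinearMap.sub_apply, sub_eq_zero, Stmt2Aux.QQ_apply_vv hinj] at h0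
    exact h0.symm
  have huw : ∀ n, u (Stmt2Aux.ww p n) = 0 := by
    intro n
    have h1 := hlb 0
    have h2 := hOple n
    have e1 : RCLike.re (inner ℂ ((u - Stmt2Aux.SS p 0) (Stmt2Aux.ww p n)) (Stmt2Aux.ww p n) : ℂ)
        = RCLike.re (inner ℂ (u (Stmt2Aux.ww p n)) (Stmt2Aux.ww p n) : ℂ) := by
      rw [ContinuousLinearMap.sub_apply, inner_sub_left, map_sub,
        Stmt2Aux.SS_apply_ww hinj, inner_zero_left]
      simp
    have e2 : RCLike.re (inner ℂ ((Stmt2Aux.QQ p n - u) (Stmt2Aux.ww p n)) (Stmt2Aux.ww p n) : ℂ)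
        = - RCLike.re (inner ℂ (u (Stmt2Aux.ww p n)) (Stmt2Aux.ww p n) : ℂ) := by
      rw [ContinuousLinearMap.sub_apply, inner_sub_left, map_sub,
        Stmt2Aux.QQ_apply_ww hinj le_rfl, inner_zero_left]
      simp
    have a1 := h1.2 (Stmt2Aux.ww p n)
    rw [ContinuousLinearMap.reApplyInnerSelf_apply, e1] at a1
    have a2 := h2.2 (Stmt2Aux.ww p n)
    rw [ContinuousLinearMap.reApplyInnerSelf_apply, e2] at a2
    have hz : RCLike.re (inner ℂ ((u - Stmt2Aux.SS p 0) (Stmt2Aux.ww p n)) (Stmt2Aux.ww p n) : ℂ)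
        = 0 := by
      rw [e1]; linarith
    have h0 := Stmt2Aux.pos_null h1 hz
    rw [ContinuousLinearMap.sub_apply, sub_eq_zero, Stmt2Aux.SS_apply_ww hinj] at h0
    exact h0
  have hue : ∀ n, u (delta (p (2*n))) = Stmt2Aux.vv p n := by
    intro n
    have hsum : Stmt2Aux.vv p n + Stmt2Aux.ww p n = (2:ℂ) • delta (p (2*n)) := by
      rw [Stmt2Aux.vv, Stmt2Aux.ww]
      module
    have h2 : (2:ℂ) • u (delta (p (2*n))) = (2:ℂ) • Stmt2Aux.vv p n := by
      rw [← map_smul, ← hsum, map_add, huv n, huw n, add_zero]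
    exact smul_right_injective (H X) two_ne_zero h2
  have hentry : ∀ n, entry u (p (2*n+1)) (p (2*n)) = 1 := by
    intro n
    have hne : p (2*n+1) ≠ p (2*n) := by
      intro h
      have := hinj h
      omega
    unfold entry
    rw [hue n, Stmt2Aux.vv, lp.coeFn_add, Pi.add_apply,
      Stmt2Aux.delta_apply_ne hne, Stmt2Aux.delta_apply_self, zero_add]
  obtain ⟨T, hTD, hdist⟩ := Metric.mem_closure_iff.mp hu_roe (1/2) (by norm_num)
  obtain ⟨L, hL⟩ := hTD
  obtain ⟨n0, hn0⟩ := exists_nat_ge L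
  have hdn : L ≤ dist (p (2*n0)) (p (2*n0+1)) := by
    have h1 := hp (2*n0) (2*n0+1) (by omega)
    have h2 : (n0:ℝ) ≤ ((2*n0+1 : ℕ):ℝ) := by push_cast; linarith [(Nat.cast_nonneg n0 : (0:ℝ) ≤ (n0:ℝ))]
    linarith
  have hTz : entry T (p (2*n0+1)) (p (2*n0)) = 0 := hL _ _ hdn
  have hent : ‖entry u (p (2*n0+1)) (p (2*n0)) - entry T (p (2*n0+1)) (p (2*n0))‖
      ≤ ‖u - T‖ := by
    have h1 : entry u (p (2*n0+1)) (p (2*n0)) - entry T (p (2*n0+1)) (p (2*n0))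
        = ((u - T) (delta (p (2*n0)))) (p (2*n0+1)) := by
      unfold entry
      rw [ContinuousLinearMap.sub_apply, lp.coeFn_sub]
      simp
    rw [h1]
    calc ‖((u - T) (delta (p (2*n0)))) (p (2*n0+1))‖
        ≤ ‖(u - T) (delta (p (2*n0)))‖ :=
          lp.norm_apply_le_norm (by norm_num) _ _
      _ ≤ ‖u - T‖ * ‖(delta (p (2*n0)) : H X)‖ := ContinuousLinearMap.le_opNorm _ _
      _ = ‖u - T‖ := by rw [Stmt2Aux.norm_delta, mul_one]
  rw [hentry n0, hTz, sub_zero] at hent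
  rw [dist_eq_norm] at hdist
  simp only [norm_one] at hent
  linarith
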